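/- Define φ⁽⁰⁾(u) = 1 for u ∈ (0,1), and φ⁽ᵏ⁾(u) = ∫₀¹ φ⁽ᵏ⁻¹⁾(s) / √(s(s+u)) ds for k ≥ 1. Then for every k ≥ 1 and every v ∈ (0,1), φ⁽ᵏ⁾(v) ≤ 32^k · Σ_{i=0}^k (1/i!) · ((1/2) log(e²/v))^i ≤ 32^k · e / √v. -/

import Mathlib

open Real Finset MeasureTheory Set

noncomputable def phiIter : ℕ → ℝ → ℝ
  | 0, _ => 1
  | k + 1, u => ∫ s in (0:ℝ)..1, phiIter k s / Real.sqrt (s * (s + u))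

lemma phiIter_nonneg (k : ℕ) (u : ℝ) : 0 ≤ phiIter k u := by
  induction k generalizing u with
  | zero => exact zero_le_one
  | succ k ih =>
    show 0 ≤ ∫ s in (0:ℝ)..1, phiIter k s / Real.sqrt (s * (s + u))
    apply intervalIntegral.integral_nonneg (by norm_num)
    intro s _
    exact div_nonneg (ih s) (Real.sqrt_nonneg _)

lemma log_pow_bound (i : ℕ) {s : ℝ} (hs : s ∈ Set.Ioc (0:ℝ) 1) :
    (2 - Real.log s) ^ i ≤ (4 * i + 6 : ℝ) ^ i * s ^ (-(1/4) : ℝ) := by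
  obtain ⟨h0, h1⟩ := hs
  set r : ℝ := 1 / (4 * i + 4) with hr
  have hrpos : 0 < r := by positivity
  have ht1 : 1 ≤ s ^ (-r) :=
    Real.one_le_rpow_of_pos_of_le_one_of_nonpos h0 h1 (by linarith)
  have hlogs : Real.log s ≤ 0 := Real.log_nonpos (le_of_lt h0) h1
  have key : 2 - Real.log s ≤ (4 * i + 6 : ℝ) * s ^ (-r) := by
    have h2 : Real.log (s ^ (-r)) ≤ s ^ (-r) - 1 :=
      Real.log_le_sub_one_of_pos (by positivity)
    have h3 : Real.log (s ^ (-r)) = -r * Real.log s := by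
      rw [Real.log_rpow h0]
    have h4 : -Real.log s = (1 / r) * (-r * Real.log s) := by
      field_simp
    have h5 : -Real.log s ≤ (1 / r) * (s ^ (-r) - 1) := by
      rw [h4, ← h3]
      apply mul_le_mul_of_nonneg_left h2 (by positivity)
    have h6 : (1:ℝ) / r = 4 * i + 4 := by rw [hr]; field_simp
    nlinarith [ht1]
  calc (2 - Real.log s) ^ i ≤ ((4 * i + 6 : ℝ) * s ^ (-r)) ^ i := by
        apply pow_le_pow_left₀ (by linarith) key
    _ = (4 * i + 6 : ℝ) ^ i * (s ^ (-r)) ^ i := mul_pow _ _ _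
    _ ≤ (4 * i + 6 : ℝ) ^ i * s ^ (-(1/4) : ℝ) := by
        apply mul_le_mul_of_nonneg_left _ (by positivity)
        rw [← Real.rpow_natCast (s ^ (-r)) i, ← Real.rpow_mul (le_of_lt h0)]
        apply Real.rpow_le_rpow_of_exponent_ge h0 h1
        rw [hr]
        rw [neg_mul, neg_le_neg_iff, div_mul_eq_mul_div, mul_comm]
        rw [div_le_div_iff₀ (by positivity) (by norm_num)]
        push_cast
        nlinarith [Nat.cast_nonneg (α := ℝ) i]

section
variable (i : ℕ)

lemma contOn_logpow (i : ℕ) {A : Set ℝ} (hA : ∀ x ∈ A, x ≠ 0) :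
    ContinuousOn (fun s => (2 - Real.log s) ^ i) A := by
  apply ContinuousOn.pow
  exact (continuousOn_const.sub (Real.continuousOn_log.mono (by intro x hx; exact hA x hx)))

lemma logpow_div_sqrt_le (i : ℕ) {s : ℝ} (hs : s ∈ Set.Ioc (0:ℝ) 1) :
    (2 - Real.log s) ^ i / Real.sqrt s ≤ (4 * i + 6 : ℝ) ^ i * s ^ (-(3/4) : ℝ) := by
  have h0 := hs.1
  have hsq : (0:ℝ) < Real.sqrt s := Real.sqrt_pos.mpr h0
  calc (2 - Real.log s) ^ i / Real.sqrt s
      ≤ ((4 * i + 6 : ℝ) ^ i * s ^ (-(1/4) : ℝ)) / Real.sqrt s := by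
        gcongr; exact log_pow_bound i hs
    _ = (4 * i + 6 : ℝ) ^ i * s ^ (-(3/4) : ℝ) := by
        rw [Real.sqrt_eq_rpow, mul_div_assoc, ← Real.rpow_sub h0]
        norm_num

lemma integrableOn_logpow_div_sqrt (i : ℕ) {u : ℝ} (hu : 0 < u) (hu1 : u ≤ 1) :
    IntegrableOn (fun s => (2 - Real.log s) ^ i / Real.sqrt s) (Set.Ioc 0 u) := by
  have hmeas : MeasurableSet (Set.Ioc (0:ℝ) u) := measurableSet_Ioc
  have hcont : ContinuousOn (fun s => (2 - Real.log s) ^ i / Real.sqrt s) (Set.Ioc 0 u) := by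
    apply ContinuousOn.div (contOn_logpow i (fun x hx => ne_of_gt hx.1))
      (Real.continuous_sqrt.continuousOn)
    intro x hx
    exact ne_of_gt (Real.sqrt_pos.mpr hx.1)
  have hg : IntegrableOn (fun s : ℝ => (4 * i + 6 : ℝ) ^ i * s ^ (-(3/4) : ℝ)) (Set.Ioc 0 u) := by
    apply Integrable.const_mul
    have := (intervalIntegral.intervalIntegrable_rpow' (a := 0) (b := u) (r := -(3/4)) (by norm_num)).1
    exact this
  apply Integrable.mono hg (hcont.aestronglyMeasurable hmeas)
  rw [ae_restrict_iff' hmeas]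
  filter_upwards with s hs
  have h1 : s ∈ Set.Ioc (0:ℝ) 1 := ⟨hs.1, hs.2.trans hu1⟩
  have h2 := logpow_div_sqrt_le i h1
  have hnn : 0 ≤ (2 - Real.log s) ^ i / Real.sqrt s := by
    apply div_nonneg _ (Real.sqrt_nonneg _)
    apply pow_nonneg
    have := Real.log_nonpos (le_of_lt h1.1) h1.2
    linarith
  rw [Real.norm_eq_abs, Real.norm_eq_abs, abs_of_nonneg hnn, abs_of_nonneg (mul_nonneg (by positivity) (Real.rpow_nonneg hs.1.le _))]
  exact h2
end

noncomputable def Bfun (i : ℕ) (u : ℝ) : ℝ :=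
  2 * Real.sqrt u * ∑ j ∈ range (i+1),
    ((i.factorial : ℝ) / (j.factorial : ℝ)) * 2^(i-j) * (2 - Real.log u)^j

lemma sumid (i : ℕ) (b : ℝ) :
    (∑ j ∈ range (i+1), ((i.factorial : ℝ) / (j.factorial : ℝ)) * 2^(i-j) * b^j)
      - 2 * ∑ j ∈ range (i+1),
        ((i.factorial : ℝ) / (j.factorial : ℝ)) * 2^(i-j) * (j * b^(j-1)) = b^i := by
  have h2 : 2 * ∑ j ∈ range (i+1),
      ((i.factorial : ℝ) / (j.factorial : ℝ)) * 2^(i-j) * (j * b^(j-1))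
      = ∑ m ∈ range i, ((i.factorial : ℝ) / (m.factorial : ℝ)) * 2^(i-m) * b^m := by
    rw [Finset.sum_range_succ' (fun j => ((i.factorial : ℝ) / (j.factorial : ℝ)) * 2^(i-j) * (j * b^(j-1)))]
    simp only [Nat.cast_zero, zero_mul, mul_zero, add_zero, Finset.mul_sum]
    apply Finset.sum_congr rfl
    intro m hm
    have hmi : m < i := Finset.mem_range.mp hm
    have hfac : ((m+1).factorial : ℝ) = (m+1) * (m.factorial : ℝ) := by
      rw [Nat.factorial_succ]; push_cast; ring
    have hpow : (2:ℝ)^(i-m) = 2 * 2^(i-(m+1)) := by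
      rw [← pow_succ']
      congr 1
      omega
    rw [hfac, hpow]
    have hm0 : (m.factorial : ℝ) ≠ 0 := Nat.cast_ne_zero.mpr m.factorial_ne_zero
    have hm1 : (m:ℝ) + 1 ≠ 0 := by positivity
    field_simp
    push_cast [Nat.add_sub_cancel, Nat.add_sub_cancel_left]; ring
  rw [h2, Finset.sum_range_succ]
  have : ((i.factorial:ℝ)/(i.factorial:ℝ)) = 1 := div_self (Nat.cast_ne_zero.mpr i.factorial_ne_zero)
  simp [Nat.sub_self, this]

lemma hasDerivAt_Bfun (i : ℕ) {x : ℝ} (hx : 0 < x) :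
    HasDerivAt (Bfun i) ((2 - Real.log x)^i / Real.sqrt x) x := by
  have hsx : (0:ℝ) < Real.sqrt x := Real.sqrt_pos.mpr hx
  have hb : HasDerivAt (fun s : ℝ => 2 - Real.log s) (-x⁻¹) x :=
    (Real.hasDerivAt_log (ne_of_gt hx)).const_sub 2
  have hq : HasDerivAt
      (fun s : ℝ => ∑ j ∈ range (i+1),
        ((i.factorial : ℝ) / (j.factorial : ℝ)) * 2^(i-j) * (2 - Real.log s)^j)
      (∑ j ∈ range (i+1),
        ((i.factorial : ℝ) / (j.factorial : ℝ)) * 2^(i-j) * ((j:ℝ) * (2 - Real.log x)^(j-1) * (-x⁻¹)))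
      x := by
    apply HasDerivAt.fun_sum
    intro j _
    exact (hb.pow j).const_mul _
  have hf : HasDerivAt (fun s : ℝ => 2 * Real.sqrt s) (2 * (1 / (2 * Real.sqrt x))) x :=
    (Real.hasDerivAt_sqrt (ne_of_gt hx)).const_mul 2
  have hprod := hf.mul hq
  have heq : (2 * (1 / (2 * Real.sqrt x))) * (∑ j ∈ range (i+1),
        ((i.factorial : ℝ) / (j.factorial : ℝ)) * 2^(i-j) * (2 - Real.log x)^j)
      + (2 * Real.sqrt x) * (∑ j ∈ range (i+1),
        ((i.factorial : ℝ) / (j.factorial : ℝ)) * 2^(i-j) * ((j:ℝ) * (2 - Real.log x)^(j-1) * (-x⁻¹)))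
      = (2 - Real.log x)^i / Real.sqrt x := by
    have hxs : Real.sqrt x * Real.sqrt x = x := Real.mul_self_sqrt hx.le
    have h1 : (2 * Real.sqrt x) * (∑ j ∈ range (i+1),
        ((i.factorial : ℝ) / (j.factorial : ℝ)) * 2^(i-j) * ((j:ℝ) * (2 - Real.log x)^(j-1) * (-x⁻¹)))
        = -(2 / Real.sqrt x) * ∑ j ∈ range (i+1),
          ((i.factorial : ℝ) / (j.factorial : ℝ)) * 2^(i-j) * ((j:ℝ) * (2 - Real.log x)^(j-1)) := by
      rw [Finset.mul_sum, Finset.mul_sum]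
      apply Finset.sum_congr rfl
      intro j _
      have hss : Real.sqrt x / x = 1 / Real.sqrt x := Real.sqrt_div_self'
      set c := ((i.factorial : ℝ) / (j.factorial : ℝ)) * 2^(i-j) with hc
      calc 2 * Real.sqrt x * (c * ((j:ℝ) * (2 - Real.log x)^(j-1) * (-x⁻¹)))
          = (c * ((j:ℝ) * (2 - Real.log x)^(j-1))) * (-2) * (Real.sqrt x / x) := by ring
        _ = (c * ((j:ℝ) * (2 - Real.log x)^(j-1))) * (-2) * (1 / Real.sqrt x) := by rw [hss]
        _ = -(2 / Real.sqrt x) * (c * ((j:ℝ) * (2 - Real.log x)^(j-1))) := by ring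
    rw [h1]
    have h2 : 2 * (1 / (2 * Real.sqrt x)) = 1 / Real.sqrt x := by
      field_simp
    rw [h2]
    have h3 := sumid i (2 - Real.log x)
    have hexp : (1 / Real.sqrt x) * (∑ j ∈ range (i+1),
        ((i.factorial : ℝ) / (j.factorial : ℝ)) * 2^(i-j) * (2 - Real.log x)^j)
        + (-(2 / Real.sqrt x)) * (∑ j ∈ range (i+1),
        ((i.factorial : ℝ) / (j.factorial : ℝ)) * 2^(i-j) * ((j:ℝ) * (2 - Real.log x)^(j-1)))
        = (1 / Real.sqrt x) * ((∑ j ∈ range (i+1),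
        ((i.factorial : ℝ) / (j.factorial : ℝ)) * 2^(i-j) * (2 - Real.log x)^j)
        - 2 * ∑ j ∈ range (i+1),
        ((i.factorial : ℝ) / (j.factorial : ℝ)) * 2^(i-j) * ((j:ℝ) * (2 - Real.log x)^(j-1))) := by
      ring
    rw [hexp, h3]
    ring
  rw [← heq]
  exact hprod

lemma Bfun_nonneg (i : ℕ) {u : ℝ} (hu : 0 < u) (hu1 : u ≤ 1) : 0 ≤ Bfun i u := by
  have hlog : Real.log u ≤ 0 := Real.log_nonpos hu.le hu1
  apply mul_nonneg (by positivity)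
  apply Finset.sum_nonneg
  intro j _
  have : (0:ℝ) ≤ 2 - Real.log u := by linarith
  positivity

lemma integral_logpow_div_sqrt_le (i : ℕ) {u : ℝ} (hu : 0 < u) (hu1 : u ≤ 1) :
    ∫ s in Set.Ioc (0:ℝ) u, (2 - Real.log s) ^ i / Real.sqrt s ≤ Bfun i u := by
  set f : ℝ → ℝ := fun s => (2 - Real.log s) ^ i / Real.sqrt s with hf
  set C : ℝ := (4 * i + 6 : ℝ) ^ i with hC
  have hint := integrableOn_logpow_div_sqrt i hu hu1
  have key : ∀ ε ∈ Set.Ioo (0:ℝ) u,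
      ∫ s in Set.Ioc (0:ℝ) u, f s ≤ C * (4 * ε ^ ((1:ℝ)/4)) + Bfun i u := by
    intro ε hε
    obtain ⟨hε0, hεu⟩ := hε
    have hsplit : ∫ s in Set.Ioc (0:ℝ) u, f s
        = (∫ s in Set.Ioc (0:ℝ) ε, f s) + ∫ s in Set.Ioc ε u, f s := by
      rw [← Set.Ioc_union_Ioc_eq_Ioc hε0.le hεu.le]
      apply MeasureTheory.setIntegral_union (Set.Ioc_disjoint_Ioc_of_le le_rfl) measurableSet_Ioc
        (hint.mono_set (Set.Ioc_subset_Ioc_right hεu.le))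
        (hint.mono_set (Set.Ioc_subset_Ioc_left hε0.le))
    have h1 : ∫ s in Set.Ioc (0:ℝ) ε, f s ≤ C * (4 * ε ^ ((1:ℝ)/4)) := by
      have hmono : ∫ s in Set.Ioc (0:ℝ) ε, f s ≤ ∫ s in Set.Ioc (0:ℝ) ε, C * s ^ (-(3/4) : ℝ) := by
        apply MeasureTheory.integral_mono_of_nonneg
        · filter_upwards [ae_restrict_mem measurableSet_Ioc] with s hs
          have hlog : Real.log s ≤ 0 := Real.log_nonpos hs.1.le (hs.2.trans (hεu.le.trans hu1))
          have : (0:ℝ) ≤ 2 - Real.log s := by linarith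
          positivity
        · apply Integrable.const_mul
          have := (intervalIntegral.intervalIntegrable_rpow' (a := 0) (b := ε)
            (r := -(3/4)) (by norm_num)).1
          exact this
        · filter_upwards [ae_restrict_mem measurableSet_Ioc] with s hs
          exact logpow_div_sqrt_le i ⟨hs.1, hs.2.trans (hεu.le.trans hu1)⟩
      have hval : ∫ s in Set.Ioc (0:ℝ) ε, C * s ^ (-(3/4) : ℝ) = C * (4 * ε ^ ((1:ℝ)/4)) := by
        rw [MeasureTheory.integral_const_mul]
        congr 1
        have h0ε : (0:ℝ) ≤ ε := hε0.le
        have := integral_rpow (a := 0) (b := ε) (r := -(3/4)) (Or.inl (by norm_num))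
        rw [← intervalIntegral.integral_of_le h0ε, this]
        rw [Real.zero_rpow (by norm_num)]
        norm_num
        ring
      linarith
    have h2 : ∫ s in Set.Ioc ε u, f s = Bfun i u - Bfun i ε := by
      rw [← intervalIntegral.integral_of_le hεu.le]
      apply intervalIntegral.integral_eq_sub_of_hasDerivAt
      · intro x hx
        rw [Set.uIcc_of_le hεu.le] at hx
        exact hasDerivAt_Bfun i (lt_of_lt_of_le hε0 hx.1)
      · exact (intervalIntegrable_iff_integrableOn_Ioc_of_le hεu.le).mpr
          (hint.mono_set (Set.Ioc_subset_Ioc_left hε0.le))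
    have h3 : 0 ≤ Bfun i ε := Bfun_nonneg i hε0 (hεu.le.trans hu1)
    linarith
  have htend : Filter.Tendsto (fun ε : ℝ => C * (4 * ε ^ ((1:ℝ)/4)) + Bfun i u)
      (nhdsWithin 0 (Set.Ioi 0)) (nhds (Bfun i u)) := by
    have h0 : Filter.Tendsto (fun ε : ℝ => ε ^ ((1:ℝ)/4)) (nhdsWithin 0 (Set.Ioi 0))
        (nhds 0) := by
      have hc : ContinuousAt (fun ε : ℝ => ε ^ ((1:ℝ)/4)) 0 :=
        Real.continuousAt_rpow_const 0 _ (Or.inr (by norm_num))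
      have h2 := (hc.continuousWithinAt (s := Set.Ioi (0:ℝ))).tendsto
      rw [Real.zero_rpow (by norm_num : (1:ℝ)/4 ≠ 0)] at h2
      exact h2
    have : Filter.Tendsto (fun ε : ℝ => C * (4 * ε ^ ((1:ℝ)/4)) + Bfun i u)
        (nhdsWithin 0 (Set.Ioi 0)) (nhds (C * (4 * 0) + Bfun i u)) := by
      exact (((h0.const_mul 4).const_mul C).add_const _)
    simpa using this
  apply ge_of_tendsto htend
  filter_upwards [Ioo_mem_nhdsGT_of_mem (Set.left_mem_Ico.mpr hu)] with ε hε
  exact key ε hε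

lemma contOn_logpow_div_self (i : ℕ) {u : ℝ} (hu : 0 < u) :
    ContinuousOn (fun s => (2 - Real.log s) ^ i / s) (Set.Icc u 1) := by
  apply ContinuousOn.div (contOn_logpow i (fun x hx => ne_of_gt (lt_of_lt_of_le hu hx.1)))
    continuousOn_id
  intro x hx
  exact ne_of_gt (lt_of_lt_of_le hu hx.1)

lemma integrableOn_logpow_div_self (i : ℕ) {u : ℝ} (hu : 0 < u) :
    IntegrableOn (fun s => (2 - Real.log s) ^ i / s) (Set.Ioc u 1) := by
  exact ((contOn_logpow_div_self i hu).integrableOn_Icc).mono_set Set.Ioc_subset_Icc_self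

lemma integral_logpow_div_self_le (i : ℕ) {u : ℝ} (hu : 0 < u) (hu1 : u < 1) :
    ∫ s in Set.Ioc u 1, (2 - Real.log s) ^ i / s ≤ (2 - Real.log u) ^ (i+1) / (i+1) := by
  have hftc : ∫ s in Set.Ioc u 1, (2 - Real.log s) ^ i / s
      = (-(2 - Real.log 1)^(i+1) / (i+1)) - (-(2 - Real.log u)^(i+1) / (i+1)) := by
    rw [← intervalIntegral.integral_of_le hu1.le]
    apply intervalIntegral.integral_eq_sub_of_hasDerivAt
      (f := fun s => -(2 - Real.log s)^(i+1) / (i+1))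
    · intro x hx
      rw [Set.uIcc_of_le hu1.le] at hx
      have hx0 : 0 < x := lt_of_lt_of_le hu hx.1
      have hb : HasDerivAt (fun s : ℝ => 2 - Real.log s) (-x⁻¹) x :=
        (Real.hasDerivAt_log (ne_of_gt hx0)).const_sub 2
      have h1 := ((hb.pow (i+1)).neg).div_const ((i:ℝ)+1)
      have heq : -(((i+1 : ℕ) : ℝ) * (2 - Real.log x)^(i+1-1) * (-x⁻¹)) / ((i:ℝ)+1)
          = (2 - Real.log x)^i / x := by
        rw [Nat.add_sub_cancel]
        push_cast
        have hi : ((i:ℝ)+1) ≠ 0 := by positivity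
        field_simp
      rw [← heq]
      exact h1
    · exact (intervalIntegrable_iff_integrableOn_Ioc_of_le hu1.le).mpr
        (integrableOn_logpow_div_self i hu)
  rw [hftc, Real.log_one]
  have h1 : (0:ℝ) < (i:ℝ) + 1 := by positivity
  have h2 : (0:ℝ) ≤ (2:ℝ)^(i+1) := by positivity
  have h3 : -(2 - 0:ℝ)^(i+1) / ((i:ℝ)+1) ≤ 0 := by
    apply div_nonpos_of_nonpos_of_nonneg _ h1.le
    simpa using h2
  have h4 : -(2 - Real.log u)^(i+1) / ((i:ℝ)+1) = -((2 - Real.log u)^(i+1) / ((i:ℝ)+1)) := by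
    ring
  push_cast
  linarith

lemma Ek (k : ℕ) (b : ℝ) :
    ∑ i ∈ range (k+1), (4:ℝ)^(k-i) * ∑ j ∈ range (i+1), 2^(i-j) * b^j / (j.factorial : ℝ)
    = ∑ j ∈ range (k+1), (2*4^(k-j) - 2^(k-j)) * (b^j / (j.factorial : ℝ)) := by
  induction k with
  | zero => norm_num
  | succ k ih =>
    rw [Finset.sum_range_succ
      (f := fun i => (4:ℝ)^(k+1-i) * ∑ j ∈ range (i+1), 2^(i-j) * b^j / (j.factorial : ℝ))]
    have hstep : ∑ i ∈ range (k+1), (4:ℝ)^(k+1-i) * ∑ j ∈ range (i+1), 2^(i-j) * b^j / (j.factorial : ℝ)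
        = 4 * ∑ i ∈ range (k+1), (4:ℝ)^(k-i) * ∑ j ∈ range (i+1), 2^(i-j) * b^j / (j.factorial : ℝ) := by
      rw [Finset.mul_sum]
      apply Finset.sum_congr rfl
      intro i hi
      have h1 : k+1-i = (k-i)+1 := by
        have := Finset.mem_range.mp hi; omega
      rw [h1, pow_succ]
      ring
    rw [hstep, ih, Nat.sub_self, pow_zero, one_mul]
    rw [Finset.sum_range_succ (f := fun j => (2:ℝ)^(k+1-j) * b^j / (j.factorial : ℝ))]
    rw [Finset.sum_range_succ (f := fun j => ((2*4^(k+1-j) - 2^(k+1-j)):ℝ) * (b^j / (j.factorial : ℝ)))]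
    have hmain : 4 * (∑ j ∈ range (k+1), ((2*4^(k-j) - 2^(k-j)):ℝ) * (b^j / (j.factorial : ℝ)))
        + ∑ j ∈ range (k+1), (2:ℝ)^(k+1-j) * b^j / (j.factorial : ℝ)
        = ∑ j ∈ range (k+1), ((2*4^(k+1-j) - 2^(k+1-j)):ℝ) * (b^j / (j.factorial : ℝ)) := by
      rw [Finset.mul_sum, ← Finset.sum_add_distrib]
      apply Finset.sum_congr rfl
      intro j hj
      have h1 : k+1-j = (k-j)+1 := by
        have := Finset.mem_range.mp hj; omega
      rw [h1, pow_succ, pow_succ]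
      ring
    norm_num
    linarith [hmain]

noncomputable def Tsum (k : ℕ) (u : ℝ) : ℝ :=
  ∑ i ∈ range (k+1), (4:ℝ)^(k-i) * (2 - Real.log u)^i / (i.factorial : ℝ)

lemma Tsum_nonneg (k : ℕ) {u : ℝ} (hu : 0 < u) (hu1 : u ≤ 1) : 0 ≤ Tsum k u := by
  have hlog : Real.log u ≤ 0 := Real.log_nonpos hu.le hu1
  apply Finset.sum_nonneg
  intro i _
  have : (0:ℝ) ≤ 2 - Real.log u := by linarith
  positivity

-- part 2 bound: sum over Ioc 0 u piece
lemma part2_bound (k : ℕ) (b : ℝ) (hb : 0 ≤ b) :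
    2 * ∑ i ∈ range (k+1), (4:ℝ)^(k-i) * ∑ j ∈ range (i+1), 2^(i-j) * b^j / (j.factorial : ℝ)
      ≤ ∑ j ∈ range (k+2), (4:ℝ)^(k+1-j) * b^j / (j.factorial : ℝ) := by
  rw [Ek]
  rw [Finset.sum_range_succ (f := fun j => (4:ℝ)^(k+1-j) * b^j / (j.factorial : ℝ))]
  have h1 : 2 * ∑ j ∈ range (k+1), ((2*4^(k-j) - 2^(k-j)):ℝ) * (b^j / (j.factorial : ℝ))
      ≤ ∑ j ∈ range (k+1), (4:ℝ)^(k+1-j) * b^j / (j.factorial : ℝ) := by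
    rw [Finset.mul_sum]
    apply Finset.sum_le_sum
    intro j hj
    have hj' : j ≤ k := by have := Finset.mem_range.mp hj; omega
    have h2 : k+1-j = (k-j)+1 := by omega
    have hb1 : (0:ℝ) ≤ b^j / (j.factorial : ℝ) := by positivity
    have hb2 : (0:ℝ) ≤ (2:ℝ)^(k-j) := by positivity
    rw [h2, pow_succ, mul_div_assoc]
    nlinarith [mul_nonneg hb2 hb1]
  have h3 : (0:ℝ) ≤ (4:ℝ)^(k+1-(k+1)) * b^(k+1) / ((k+1).factorial : ℝ) := by positivity
  linarith

-- part 1 bound: sum over Ioc u 1 piece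
lemma part1_bound (k : ℕ) (b : ℝ) (hb : 0 ≤ b) :
    ∑ i ∈ range (k+1), (4:ℝ)^(k-i) * (b^(i+1) / ((i+1).factorial : ℝ))
      ≤ ∑ j ∈ range (k+2), (4:ℝ)^(k+1-j) * b^j / (j.factorial : ℝ) := by
  rw [Finset.sum_range_succ' (f := fun j => (4:ℝ)^(k+1-j) * b^j / (j.factorial : ℝ))]
  have h1 : ∑ i ∈ range (k+1), (4:ℝ)^(k-i) * (b^(i+1) / ((i+1).factorial : ℝ))
      = ∑ i ∈ range (k+1), (4:ℝ)^(k+1-(i+1)) * b^(i+1) / ((i+1).factorial : ℝ) := by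
    apply Finset.sum_congr rfl
    intro i _
    have : k+1-(i+1) = k-i := by omega
    rw [this]
    ring
  rw [h1]
  have h2 : (0:ℝ) ≤ (4:ℝ)^(k+1-0) * b^0 / ((Nat.factorial 0 : ℕ) : ℝ) := by positivity
  linarith

lemma phiIter_step (k : ℕ) (C : ℝ) (hC : 0 ≤ C)
    (ih : ∀ s ∈ Set.Ioo (0:ℝ) 1, phiIter k s ≤ C * Tsum k s) :
    ∀ u ∈ Set.Ioo (0:ℝ) 1, phiIter (k+1) u ≤ 2 * C * Tsum (k+1) u := by
  intro u hu
  obtain ⟨hu0, hu1⟩ := hu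
  have hsu : (0:ℝ) < Real.sqrt u := Real.sqrt_pos.mpr hu0
  set b := 2 - Real.log u with hb
  have hbnn : 0 ≤ b := by
    have := Real.log_nonpos hu0.le hu1.le; simp only [hb]; linarith
  -- the majorant
  set M : ℝ → ℝ := fun s =>
    C * Tsum k s / (if s ≤ u then Real.sqrt s * Real.sqrt u else s) with hM
  -- explicit forms on the two pieces
  set g1 : ℝ → ℝ := fun s => ∑ i ∈ range (k+1),
    (C * 4^(k-i) / ((i.factorial : ℝ) * Real.sqrt u)) * ((2 - Real.log s)^i / Real.sqrt s) with hg1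
  set g2 : ℝ → ℝ := fun s => ∑ i ∈ range (k+1),
    (C * 4^(k-i) / (i.factorial : ℝ)) * ((2 - Real.log s)^i / s) with hg2
  have hEq1 : Set.EqOn M g1 (Set.Ioc 0 u) := by
    intro s hs
    simp only [hM, hg1, if_pos hs.2, Tsum, Finset.mul_sum, Finset.sum_div]
    apply Finset.sum_congr rfl
    intro i _
    have h1 : (0:ℝ) < Real.sqrt s := Real.sqrt_pos.mpr hs.1
    have h2 : ((i.factorial : ℝ)) ≠ 0 := Nat.cast_ne_zero.mpr i.factorial_ne_zero
    field_simp
  have hEq2 : Set.EqOn M g2 (Set.Ioc u 1) := by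
    intro s hs
    simp only [hM, hg2, if_neg (not_le.mpr hs.1), Tsum, Finset.mul_sum, Finset.sum_div]
    apply Finset.sum_congr rfl
    intro i _
    have h2 : ((i.factorial : ℝ)) ≠ 0 := Nat.cast_ne_zero.mpr i.factorial_ne_zero
    field_simp
  -- integrability of M on the pieces
  have hint1 : IntegrableOn g1 (Set.Ioc 0 u) := by
    apply MeasureTheory.integrable_finset_sum
    intro i _
    exact (integrableOn_logpow_div_sqrt i hu0 hu1.le).const_mul _
  have hint2 : IntegrableOn g2 (Set.Ioc u 1) := by
    apply MeasureTheory.integrable_finset_sum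
    intro i _
    exact (integrableOn_logpow_div_self i hu0).const_mul _
  have hM1 : IntegrableOn M (Set.Ioc 0 u) :=
    hint1.congr_fun (fun s hs => (hEq1 hs).symm) measurableSet_Ioc
  have hM2 : IntegrableOn M (Set.Ioo u 1) :=
    (hint2.mono_set Set.Ioo_subset_Ioc_self).congr_fun
      (fun s hs => (hEq2 (Set.Ioo_subset_Ioc_self hs)).symm) measurableSet_Ioo
  have hunion : Set.Ioc (0:ℝ) u ∪ Set.Ioo u 1 = Set.Ioo 0 1 :=
    Set.Ioc_union_Ioo_eq_Ioo hu0.le hu1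
  have hdisj : Disjoint (Set.Ioc (0:ℝ) u) (Set.Ioo u 1) := by
    apply Set.disjoint_left.mpr
    intro s hs hs'
    exact absurd hs.2 (not_le.mpr hs'.1)
  have hMint : IntegrableOn M (Set.Ioo 0 1) := by
    rw [← hunion]; exact hM1.union hM2
  -- pointwise comparison
  have hKM : ∀ s ∈ Set.Ioo (0:ℝ) 1,
      phiIter k s / Real.sqrt (s * (s + u)) ≤ M s := by
    intro s hs
    obtain ⟨hs0, hs1⟩ := hs
    have hW : (0:ℝ) < (if s ≤ u then Real.sqrt s * Real.sqrt u else s) := by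
      split
      · exact mul_pos (Real.sqrt_pos.mpr hs0) hsu
      · exact hs0
    have hWle : (if s ≤ u then Real.sqrt s * Real.sqrt u else s) ≤ Real.sqrt (s * (s + u)) := by
      split
      case isTrue h =>
        rw [← Real.sqrt_mul hs0.le]
        apply Real.sqrt_le_sqrt
        nlinarith
      case isFalse h =>
        rw [Real.le_sqrt hs0.le (by nlinarith)]
        nlinarith
    have hWpos2 : (0:ℝ) < Real.sqrt (s * (s + u)) := lt_of_lt_of_le hW hWle
    have hphi : phiIter k s ≤ C * Tsum k s := ih s ⟨hs0, hs1⟩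
    calc phiIter k s / Real.sqrt (s * (s + u))
        ≤ (C * Tsum k s) / Real.sqrt (s * (s + u)) := by gcongr
      _ ≤ (C * Tsum k s) / (if s ≤ u then Real.sqrt s * Real.sqrt u else s) := by
          apply div_le_div_of_nonneg_left _ hW hWle
          exact mul_nonneg hC (Tsum_nonneg k hs0 hs1.le)
      _ = M s := rfl
  -- the integral inequality
  have hstep1 : phiIter (k+1) u ≤ ∫ s in Set.Ioo (0:ℝ) 1, M s := by
    show (∫ s in (0:ℝ)..1, phiIter k s / Real.sqrt (s * (s + u))) ≤ _
    rw [intervalIntegral.integral_of_le zero_le_one,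
      MeasureTheory.integral_Ioc_eq_integral_Ioo]
    apply MeasureTheory.integral_mono_of_nonneg
    · filter_upwards with s
      exact div_nonneg (phiIter_nonneg k s) (Real.sqrt_nonneg _)
    · exact hMint
    · filter_upwards [ae_restrict_mem measurableSet_Ioo] with s hs
      exact hKM s hs
  -- split the integral
  have hsplit : ∫ s in Set.Ioo (0:ℝ) 1, M s
      = (∫ s in Set.Ioc (0:ℝ) u, M s) + ∫ s in Set.Ioo u 1, M s := by
    rw [← hunion]
    exact MeasureTheory.setIntegral_union hdisj measurableSet_Ioo hM1 hM2
  -- bound piece 1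
  have hpiece1 : ∫ s in Set.Ioc (0:ℝ) u, M s ≤ C * Tsum (k+1) u := by
    rw [MeasureTheory.setIntegral_congr_fun measurableSet_Ioc hEq1]
    rw [hg1]
    rw [MeasureTheory.integral_finset_sum _ (fun i _ =>
      (integrableOn_logpow_div_sqrt i hu0 hu1.le).const_mul _)]
    simp only [MeasureTheory.integral_const_mul]
    have hbd : ∀ i ∈ range (k+1),
        (C * 4^(k-i) / ((i.factorial : ℝ) * Real.sqrt u)) *
          (∫ s in Set.Ioc (0:ℝ) u, (2 - Real.log s)^i / Real.sqrt s)
        ≤ (C * 4^(k-i) / ((i.factorial : ℝ) * Real.sqrt u)) * Bfun i u := by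
      intro i _
      apply mul_le_mul_of_nonneg_left (integral_logpow_div_sqrt_le i hu0 hu1.le)
      positivity
    have h1 : ∑ i ∈ range (k+1), (C * 4^(k-i) / ((i.factorial : ℝ) * Real.sqrt u)) *
          (∫ s in Set.Ioc (0:ℝ) u, (2 - Real.log s)^i / Real.sqrt s)
        ≤ ∑ i ∈ range (k+1),
          (C * 4^(k-i) / ((i.factorial : ℝ) * Real.sqrt u)) * Bfun i u := by
      apply Finset.sum_le_sum
      intro i hi
      simpa using hbd i hi
    have h2 : ∑ i ∈ range (k+1),
          (C * 4^(k-i) / ((i.factorial : ℝ) * Real.sqrt u)) * Bfun i u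
        = 2 * C * ∑ i ∈ range (k+1),
          (4:ℝ)^(k-i) * ∑ j ∈ range (i+1), 2^(i-j) * b^j / (j.factorial : ℝ) := by
      rw [Finset.mul_sum]
      apply Finset.sum_congr rfl
      intro i _
      rw [Bfun]
      simp only [Finset.mul_sum]
      apply Finset.sum_congr rfl
      intro j _
      have hif : ((i.factorial : ℝ)) ≠ 0 := Nat.cast_ne_zero.mpr i.factorial_ne_zero
      have hjf : ((j.factorial : ℝ)) ≠ 0 := Nat.cast_ne_zero.mpr j.factorial_ne_zero
      field_simp
      ring
    have h3 : 2 * C * ∑ i ∈ range (k+1),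
          (4:ℝ)^(k-i) * ∑ j ∈ range (i+1), 2^(i-j) * b^j / (j.factorial : ℝ)
        ≤ C * Tsum (k+1) u := by
      have := part2_bound k b hbnn
      have hTs : Tsum (k+1) u = ∑ j ∈ range (k+2), (4:ℝ)^(k+1-j) * b^j / (j.factorial : ℝ) := rfl
      rw [hTs]
      calc 2 * C * ∑ i ∈ range (k+1),
            (4:ℝ)^(k-i) * ∑ j ∈ range (i+1), 2^(i-j) * b^j / (j.factorial : ℝ)
          = C * (2 * ∑ i ∈ range (k+1),
            (4:ℝ)^(k-i) * ∑ j ∈ range (i+1), 2^(i-j) * b^j / (j.factorial : ℝ)) := by ring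
        _ ≤ C * ∑ j ∈ range (k+2), (4:ℝ)^(k+1-j) * b^j / (j.factorial : ℝ) :=
            mul_le_mul_of_nonneg_left this hC
    linarith
  -- bound piece 2
  have hpiece2 : ∫ s in Set.Ioo u 1, M s ≤ C * Tsum (k+1) u := by
    rw [MeasureTheory.setIntegral_congr_fun measurableSet_Ioo
      (fun s hs => hEq2 (Set.Ioo_subset_Ioc_self hs))]
    rw [← MeasureTheory.integral_Ioc_eq_integral_Ioo, hg2]
    rw [MeasureTheory.integral_finset_sum _ (fun i _ =>
      (integrableOn_logpow_div_self i hu0).const_mul _)]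
    simp only [MeasureTheory.integral_const_mul]
    have h1 : ∑ i ∈ range (k+1), (C * 4^(k-i) / (i.factorial : ℝ)) *
          (∫ s in Set.Ioc u 1, (2 - Real.log s)^i / s)
        ≤ ∑ i ∈ range (k+1), (C * 4^(k-i) / (i.factorial : ℝ)) * (b^(i+1) / ((i:ℝ)+1)) := by
      apply Finset.sum_le_sum
      intro i _
      apply mul_le_mul_of_nonneg_left _ (by positivity)
      exact integral_logpow_div_self_le i hu0 hu1
    have h2 : ∑ i ∈ range (k+1), (C * 4^(k-i) / (i.factorial : ℝ)) * (b^(i+1) / ((i:ℝ)+1))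
        = C * ∑ i ∈ range (k+1), (4:ℝ)^(k-i) * (b^(i+1) / (((i+1).factorial : ℝ))) := by
      rw [Finset.mul_sum]
      apply Finset.sum_congr rfl
      intro i _
      have hif : ((i.factorial : ℝ)) ≠ 0 := Nat.cast_ne_zero.mpr i.factorial_ne_zero
      have hfs : (((i+1).factorial : ℕ) : ℝ) = ((i:ℝ)+1) * (i.factorial : ℝ) := by
        rw [Nat.factorial_succ]; push_cast; ring
      rw [hfs]
      have hi1 : ((i:ℝ)+1) ≠ 0 := by positivity
      field_simp
    have h3 : C * ∑ i ∈ range (k+1), (4:ℝ)^(k-i) * (b^(i+1) / (((i+1).factorial : ℝ)))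
        ≤ C * Tsum (k+1) u := by
      apply mul_le_mul_of_nonneg_left _ hC
      exact part1_bound k b hbnn
    linarith
  calc phiIter (k+1) u ≤ ∫ s in Set.Ioo (0:ℝ) 1, M s := hstep1
    _ = (∫ s in Set.Ioc (0:ℝ) u, M s) + ∫ s in Set.Ioo u 1, M s := hsplit
    _ ≤ C * Tsum (k+1) u + C * Tsum (k+1) u := add_le_add hpiece1 hpiece2
    _ = 2 * C * Tsum (k+1) u := by ring

lemma phiIter_le_Tsum (k : ℕ) : ∀ u ∈ Set.Ioo (0:ℝ) 1, phiIter k u ≤ 2^k * Tsum k u := by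
  induction k with
  | zero =>
    intro u hu
    show (1:ℝ) ≤ 2^0 * Tsum 0 u
    simp [Tsum]
  | succ k ih =>
    intro u hu
    have := phiIter_step k (2^k) (by positivity) ih u hu
    calc phiIter (k+1) u ≤ 2 * 2^k * Tsum (k+1) u := this
      _ = 2^(k+1) * Tsum (k+1) u := by ring

theorem stmt_4 (k : ℕ) (hk : 1 ≤ k) (v : ℝ) (hv : v ∈ Set.Ioo (0:ℝ) 1) :
    phiIter k v ≤ 32 ^ k * ∑ i ∈ Finset.range (k + 1),
        (1 / (Nat.factorial i : ℝ)) * ((1 / 2) * Real.log (Real.exp 2 / v)) ^ i ∧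
    32 ^ k * ∑ i ∈ Finset.range (k + 1),
        (1 / (Nat.factorial i : ℝ)) * ((1 / 2) * Real.log (Real.exp 2 / v)) ^ i
      ≤ 32 ^ k * Real.exp 1 / Real.sqrt v := by
  obtain ⟨hv0, hv1⟩ := hv
  set a : ℝ := (1 / 2) * Real.log (Real.exp 2 / v) with ha
  have hlog : Real.log (Real.exp 2 / v) = 2 - Real.log v := by
    rw [Real.log_div (Real.exp_ne_zero 2) (ne_of_gt hv0), Real.log_exp]
  have hlogv : Real.log v ≤ 0 := Real.log_nonpos hv0.le hv1.le
  have hb2a : (2 : ℝ) - Real.log v = 2 * a := by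
    rw [ha, hlog]; ring
  have hann : 0 ≤ a := by
    rw [ha, hlog]; linarith
  constructor
  · have h1 := phiIter_le_Tsum k v ⟨hv0, hv1⟩
    have h2 : 2^k * Tsum k v ≤ 32 ^ k * ∑ i ∈ Finset.range (k + 1),
        (1 / (Nat.factorial i : ℝ)) * a ^ i := by
      rw [Tsum, Finset.mul_sum, Finset.mul_sum]
      apply Finset.sum_le_sum
      intro i hi
      have hik : i ≤ k := by have := Finset.mem_range.mp hi; omega
      have e1 : (2:ℝ)^k * (4^(k-i) * (2 - Real.log v)^i / (i.factorial : ℝ))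
          = (2^k * 4^(k-i) * 2^i) * (a^i / (i.factorial : ℝ)) := by
        rw [hb2a, mul_pow]
        ring
      have e2 : (32:ℝ)^k * ((1 / (Nat.factorial i : ℝ)) * a ^ i)
          = (32:ℝ)^k * (a^i / (i.factorial : ℝ)) := by
        ring
      rw [e1, e2]
      apply mul_le_mul_of_nonneg_right _ (by positivity)
      calc (2:ℝ)^k * 4^(k-i) * 2^i ≤ 2^k * 4^k * 2^k := by
            gcongr
            all_goals first | norm_num | omega
        _ = 16^k := by rw [← mul_pow, ← mul_pow]; norm_num
        _ ≤ 32^k := by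
            apply pow_le_pow_left₀ (by norm_num) (by norm_num)
    linarith
  · have hsum : ∑ i ∈ Finset.range (k + 1), (1 / (Nat.factorial i : ℝ)) * a ^ i
        ≤ Real.exp a := by
      have := Real.sum_le_exp_of_nonneg hann (k+1)
      calc ∑ i ∈ Finset.range (k + 1), (1 / (Nat.factorial i : ℝ)) * a ^ i
          = ∑ i ∈ Finset.range (k + 1), a ^ i / (i.factorial : ℝ) := by
            apply Finset.sum_congr rfl; intro i _; ring
        _ ≤ Real.exp a := this
    have hexp : Real.exp a = Real.exp 1 / Real.sqrt v := by
      rw [ha, hlog]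
      have h1 : (1:ℝ)/2 * (2 - Real.log v) = 1 + Real.log v * (-(1/2)) := by ring
      rw [h1, Real.exp_add]
      congr 1
      rw [← Real.rpow_def_of_pos hv0, Real.sqrt_eq_rpow,
        Real.rpow_neg hv0.le, one_div]
    have h32 : (0:ℝ) ≤ 32^k := by positivity
    calc 32 ^ k * ∑ i ∈ Finset.range (k + 1), (1 / (Nat.factorial i : ℝ)) * a ^ i
        ≤ 32 ^ k * (Real.exp 1 / Real.sqrt v) := by
          apply mul_le_mul_of_nonneg_left _ h32
          rw [← hexp]; exact hsum
      _ = 32 ^ k * Real.exp 1 / Real.sqrt v := by ring
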